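/- If a linear map D : ℝ^n → ℝ^n satisfies |det(D)| = (‖D‖_HS/√n)^n and det(D) ≠ 0, then D is a scalar multiple of an orthogonal map (i.e., a homothety composed with an isometry). -/

import Mathlib

open Matrix

/-- Equality case in Hadamard's inequality: if `|det D| = (‖D‖_HS/√n)^n` and
`det D ≠ 0`, then `D` is a scalar multiple of an orthogonal matrix. -/
theorem eq_hadamard_implies_homothety {n : ℕ} (D : Matrix (Fin n) (Fin n) ℝ)
    (heq : |D.det| = (Real.sqrt (Dᵀ * D).trace / Real.sqrt n) ^ n)
    (hdet : D.det ≠ 0) :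
    ∃ (c : ℝ) (O : Matrix (Fin n) (Fin n) ℝ), O * Oᵀ = 1 ∧ D = c • O := by
  rcases Nat.eq_zero_or_pos n with hn | hn
  · subst hn
    exact ⟨1, D, Subsingleton.elim _ _, (one_smul _ _).symm⟩
  have hA : (Dᵀ * D).IsHermitian := by simpa using isHermitian_conjTranspose_mul_self D
  set μ : Fin n → ℝ := hA.eigenvalues with hμ
  set T : ℝ := (Dᵀ * D).trace with hT
  -- determinant
  have hdetA : (Dᵀ * D).det = D.det ^ 2 := by rw [det_mul, det_transpose, sq]
  have hprod : ∏ i, μ i = D.det ^ 2 := by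
    have := hA.det_eq_prod_eigenvalues
    rw [hdetA] at this
    simpa using this.symm
  -- trace = sum of eigenvalues
  have htr : T = ∑ i, μ i := by
    have h1 := congrArg Matrix.trace hA.spectral_theorem
    rw [Unitary.conjStarAlgAut_apply, trace_mul_cycle] at h1
    rw [hT, h1]
    rw [show (star (hA.eigenvectorUnitary : Matrix (Fin n) (Fin n) ℝ)) *
        (hA.eigenvectorUnitary : Matrix (Fin n) (Fin n) ℝ) = 1 from
      (Matrix.mem_unitaryGroup_iff').mp hA.eigenvectorUnitary.2, one_mul, trace_diagonal]
    simp
    rfl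
  -- positivity of eigenvalues
  have hμ0 : ∀ i, 0 < μ i := by
    intro i
    rcases lt_or_eq_of_le ((posSemidef_conjTranspose_mul_self D).eigenvalues_nonneg i) with h | h
    · exact h
    · exfalso
      apply pow_ne_zero 2 hdet
      rw [← hprod]
      exact Finset.prod_eq_zero (Finset.mem_univ i) h.symm
  have hTpos : 0 < T := by
    rw [htr]
    exact Finset.sum_pos (fun i _ => hμ0 i) (Finset.univ_nonempty_iff.mpr ⟨⟨0, hn⟩⟩)
  have hnR : (0:ℝ) < n := Nat.cast_pos.mpr hn
  -- squared equality
  have hkey : ∏ i, μ i = (T / n) ^ n := by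
    have h2 : D.det ^ 2 = ((Real.sqrt T / Real.sqrt n) ^ n) ^ 2 := by
      rw [← heq, sq_abs]
    rw [hprod, h2, ← pow_mul, mul_comm n 2, pow_mul, div_pow,
      Real.sq_sqrt hTpos.le, Real.sq_sqrt hnR.le]
  -- take logs
  have hμne : ∀ i ∈ Finset.univ, μ i ≠ 0 := fun i _ => (hμ0 i).ne'
  have hlog : Real.log (T / n) = ∑ i, (1 / (n:ℝ)) • Real.log (μ i) := by
    have hl := congrArg Real.log hkey
    rw [Real.log_prod hμne, Real.log_pow] at hl
    rw [← Finset.smul_sum, hl, smul_eq_mul]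
    field_simp
  -- Jensen equality case
  have hsum : ∑ i, (1 / (n:ℝ)) • μ i = T / n := by
    rw [← Finset.smul_sum, ← htr, smul_eq_mul]
    ring
  have hall : ∀ j ∈ Finset.univ, μ j = ∑ i ∈ Finset.univ, (1 / (n:ℝ)) • μ i := by
    rw [← (strictConcaveOn_log_Ioi.map_sum_eq_iff
      (w := fun _ : Fin n => 1 / (n:ℝ)) (p := μ)
      (fun i _ => by positivity)
      (by simp [Finset.sum_const]; field_simp)
      (fun i _ => hμ0 i))]
    rw [hsum]
    exact hlog
  have hall' : ∀ j, μ j = T / n := fun j => by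
    rw [hall j (Finset.mem_univ j), hsum]
  -- A = (T/n) • 1
  have hAeq : Dᵀ * D = (T / n) • (1 : Matrix (Fin n) (Fin n) ℝ) := by
    have hd : (diagonal (RCLike.ofReal ∘ μ) : Matrix (Fin n) (Fin n) ℝ)
        = (T / n) • (1 : Matrix (Fin n) (Fin n) ℝ) := by
      ext i j
      by_cases hij : i = j <;>
        simp [diagonal, hij, hall', Matrix.smul_apply, Matrix.one_apply]
    calc Dᵀ * D = (hA.eigenvectorUnitary : Matrix (Fin n) (Fin n) ℝ) *
          diagonal (RCLike.ofReal ∘ μ) *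
          (star (hA.eigenvectorUnitary : Matrix (Fin n) (Fin n) ℝ)) := hA.spectral_theorem
      _ = (T / n) • ((hA.eigenvectorUnitary : Matrix (Fin n) (Fin n) ℝ) *
          (star (hA.eigenvectorUnitary : Matrix (Fin n) (Fin n) ℝ))) := by
            rw [hd]; rw [Matrix.mul_smul, Matrix.smul_mul, Matrix.mul_one]
      _ = (T / n) • (1 : Matrix (Fin n) (Fin n) ℝ) := by
            rw [(Matrix.mem_unitaryGroup_iff).mp hA.eigenvectorUnitary.2]
  -- conclude
  set c : ℝ := Real.sqrt (T / n) with hc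
  have hcpos : 0 < c := Real.sqrt_pos.mpr (by positivity)
  have hc2 : c ^ 2 = T / n := Real.sq_sqrt (by positivity)
  refine ⟨c, c⁻¹ • D, ?_, by rw [smul_smul, mul_inv_cancel₀ hcpos.ne', one_smul]⟩
  rw [← mul_eq_one_comm]
  rw [Matrix.transpose_smul, Matrix.smul_mul, Matrix.mul_smul, hAeq, smul_smul, smul_smul,
    ← hc2]
  rw [show c⁻¹ * c⁻¹ * c ^ 2 = 1 by field_simp [sq]]
  exact one_smul _ _
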